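/- Let λ be a Perron number. Then no Galois conjugate of λ is purely imaginary; that is, no Galois conjugate of λ has the form i·b with b a nonzero real number. -/

import Mathlib

open Polynomial

/-- The Galois conjugates of a real algebraic number: the complex roots of its
minimal polynomial over `ℚ`. -/
def galoisConjugates (x : ℝ) : Set ℂ :=
  {z : ℂ | Polynomial.aeval z (minpoly ℚ x) = 0}

/-- A Perron number: a real algebraic integer `l > 1` all of whose Galois conjugates
other than `l` itself have modulus strictly less than `l`. -/
def IsPerron (l : ℝ) : Prop :=
  1 < l ∧ IsIntegral ℤ l ∧
    ∀ z : ℂ, z ∈ galoisConjugates l → z ≠ (l : ℂ) → ‖z‖ < l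

theorem perron_no_purely_imaginary_conjugate (l : ℝ) (hl : IsPerron l) :
    ∀ b : ℝ, b ≠ 0 → (Complex.I * (b : ℂ)) ∉ galoisConjugates l := by
  rintro b hb hmem
  obtain ⟨hl1, hint, hconj⟩ := hl
  have hl0 : (0 : ℝ) < l := lt_trans one_pos hl1
  have hintQ : IsIntegral ℚ l := hint.tower_top
  set p : ℚ[X] := minpoly ℚ l with hp
  have hmonic : p.Monic := minpoly.monic hintQ
  have hirr : Irreducible p := minpoly.irreducible hintQ
  set z : ℂ := Complex.I * (b : ℂ) with hzdef
  have hz : aeval z p = 0 := hmem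
  -- the conjugate of z is -z, and it is also a root of p
  have hconjz : (starRingEnd ℂ) z = -z := by
    simp [hzdef, Complex.conj_ofReal, mul_comm]
  have hzc : aeval (-z) p = 0 := by
    have h1 : aeval z (p.map (algebraMap ℚ ℝ)) = 0 := by
      rwa [aeval_map_algebraMap]
    have h2 := aeval_conj (p.map (algebraMap ℚ ℝ)) z
    rw [hconjz, h1, map_zero] at h2
    rwa [aeval_map_algebraMap] at h2
  -- hence p is the minimal polynomial of -z
  have hmin : minpoly ℚ (-z) = p :=
    (minpoly.eq_of_irreducible_of_monic hirr hzc hmonic).symm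
  -- p divides p.comp (-X), since p.comp (-X) kills -z
  have hdvd : p ∣ p.comp (-X) := by
    have h0 : minpoly ℚ (-z) ∣ p.comp (-X) := by
      apply minpoly.dvd
      rw [aeval_comp]
      simpa using hz
    rwa [hmin] at h0
  obtain ⟨g, hg⟩ := hdvd
  -- evaluate at l : p(-l) = p(l) * g(l) = 0
  have hnegl : aeval ((-l : ℝ) : ℂ) p = 0 := by
    have h1 : aeval (l : ℂ) (p.comp (-X)) = aeval (-(l:ℂ)) p := by
      rw [aeval_comp]; simp
    have h2 : aeval (l : ℂ) p = 0 := by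
      have h4 := minpoly.aeval ℚ l
      rw [← hp] at h4
      have h3 : aeval ((algebraMap ℝ ℂ) l) p = (algebraMap ℝ ℂ) (aeval l p) :=
        aeval_algebraMap_apply ℂ l p
      rw [h4, map_zero] at h3
      exact h3
    have := congrArg (aeval (l : ℂ)) hg
    rw [h1, map_mul, h2, zero_mul] at this
    push_cast
    exact this
  have hne : ((-l : ℝ) : ℂ) ≠ (l : ℂ) := by
    intro h
    have : (-l : ℝ) = l := by exact_mod_cast h
    linarith
  have habs := hconj ((-l : ℝ) : ℂ) hnegl hne
  rw [Complex.norm_real, Real.norm_eq_abs, abs_neg, abs_of_pos hl0] at habs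
  exact lt_irrefl l habs
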